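/- Let N ≥ 1. There exists a constant C_N > 0 depending only on N such that for every locally integrable f : ℝ^N → ℂ, every r > 0, and every nonnegative measurable function ρ : (0,∞) → [0,∞) with ∫_0^∞ ρ(s) s^{N−1} ds = 1, one has for almost every x ∈ ℝ^N: ∫_{B_x(r)} ∫_0^1 |f(t(y−x)+x)| ρ(|y−x|) dt dy ≤ C_N M(f)(x), where B_x(r) is the open ball of center x and radius r and M(f)(x) := sup_{s>0} (1/|B_x(s)|) ∫_{B_x(s)} |f(y)| dy is the Hardy–Littlewood maximal function of f. -/

import Mathlib

open MeasureTheory Filter Metric Set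
open scoped ENNReal NNReal Topology

noncomputable section

/-- 1D scaling for lintegrals. -/
lemma scale1d {c : ℝ} (hc : 0 < c) {h : ℝ → ℝ≥0∞} (hh : Measurable h) :
    ∫⁻ t in Set.Ioc (0:ℝ) 1, h (c * t) = (ENNReal.ofReal c)⁻¹ * ∫⁻ u in Set.Ioc 0 c, h u := by
  have hc0 : c ≠ 0 := hc.ne'
  have hvol : ENNReal.ofReal |c| • Measure.map (c * ·) volume = (volume : Measure ℝ) := by
    rw [Real.map_volume_mul_left hc0, smul_smul, ← ENNReal.ofReal_mul (abs_nonneg _),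
      ← abs_mul, mul_inv_cancel₀ hc0, abs_one, ENNReal.ofReal_one, one_smul]
  have hpre : (c * ·) ⁻¹' Set.Ioc (0:ℝ) c = Set.Ioc 0 1 := by
    rw [Set.preimage_const_mul_Ioc₀ _ _ hc, zero_div, div_self hc.ne']
  have : ∫⁻ u in Set.Ioc (0:ℝ) c, h u ∂volume
      = ENNReal.ofReal |c| * ∫⁻ t in Set.Ioc (0:ℝ) 1, h (c * t) := by
    conv_lhs => rw [← hvol]
    rw [Measure.restrict_smul, lintegral_smul_measure,
      setLIntegral_map measurableSet_Ioc hh (measurable_const_mul c), hpre, smul_eq_mul]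
  rw [this, ← mul_assoc, abs_of_pos hc, ENNReal.inv_mul_cancel, one_mul]
  · simp [hc]
  · exact ENNReal.ofReal_ne_top

/-- The measure of `{t ∈ (0,∞) | ofReal t < b}` is `b`. -/
lemma measure_lt_ofReal (b : ℝ≥0∞) :
    ∫⁻ t in Set.Ioi (0:ℝ), Set.indicator {t : ℝ | ENNReal.ofReal t < b} (fun _ => (1:ℝ≥0∞)) t
      = b := by
  have hmeas : MeasurableSet {t : ℝ | ENNReal.ofReal t < b} :=
    measurableSet_lt (by fun_prop) measurable_const
  rw [lintegral_indicator hmeas, Measure.restrict_restrict hmeas, setLIntegral_one]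
  rcases eq_or_ne b ⊤ with rfl | hb
  · have : {t : ℝ | ENNReal.ofReal t < ⊤} = Set.univ := by
      ext t; simp [ENNReal.ofReal_lt_top]
    rw [this, Set.univ_inter, Real.volume_Ioi]
  · have : {t : ℝ | ENNReal.ofReal t < b} ∩ Set.Ioi 0 = Set.Ioo 0 b.toReal := by
      ext t
      simp only [Set.mem_inter_iff, Set.mem_setOf_eq, Set.mem_Ioi, Set.mem_Ioo]
      constructor
      · rintro ⟨h1, h2⟩; exact ⟨h2, (ENNReal.ofReal_lt_iff_lt_toReal h2.le hb).mp h1⟩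
      · rintro ⟨h1, h2⟩; exact ⟨(ENNReal.ofReal_lt_iff_lt_toReal h1.le hb).mpr h2, h1⟩
    rw [this, Real.volume_Ioo, sub_zero, ENNReal.ofReal_toReal hb]

/-- Layer cake for products. -/
lemma layercake {α : Type*} [MeasurableSpace α] (μ : Measure α) [SigmaFinite μ]
    {g W : α → ℝ≥0∞} (hg : Measurable g) (hW : Measurable W) :
    ∫⁻ a, g a * W a ∂μ
      = ∫⁻ t in Set.Ioi (0:ℝ), ∫⁻ a in {a | ENNReal.ofReal t < W a}, g a ∂μ := by
  have hbig : MeasurableSet {p : ℝ × α | ENNReal.ofReal p.1 < W p.2} :=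
    measurableSet_lt (by fun_prop) (hW.comp measurable_snd)
  have key : ∀ t : ℝ, ∫⁻ a in {a | ENNReal.ofReal t < W a}, g a ∂μ
      = ∫⁻ a, g a * Set.indicator {p : ℝ × α | ENNReal.ofReal p.1 < W p.2}
          (fun _ => (1:ℝ≥0∞)) (t, a) ∂μ := by
    intro t
    have hs : MeasurableSet {a | ENNReal.ofReal t < W a} :=
      measurableSet_lt measurable_const hW
    rw [← lintegral_indicator hs]
    congr 1
    ext a
    by_cases h : ENNReal.ofReal t < W a
    · simp [Set.indicator_of_mem, h, Set.mem_setOf_eq]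
    · simp [Set.indicator_of_notMem, h, Set.mem_setOf_eq]
  calc ∫⁻ a, g a * W a ∂μ
      = ∫⁻ a, g a * (∫⁻ t in Set.Ioi (0:ℝ),
          Set.indicator {p : ℝ × α | ENNReal.ofReal p.1 < W p.2}
            (fun _ => (1:ℝ≥0∞)) (t, a) ∂volume) ∂μ := by
        refine lintegral_congr fun a => ?_
        congr 1
        rw [← measure_lt_ofReal (W a)]
        refine setLIntegral_congr_fun_ae measurableSet_Ioi (ae_of_all _ fun t _ => ?_)
        by_cases h : ENNReal.ofReal t < W a
        · simp [Set.indicator_of_mem, h, Set.mem_setOf_eq]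
        · simp [Set.indicator_of_notMem, h, Set.mem_setOf_eq]
    _ = ∫⁻ a, (∫⁻ t in Set.Ioi (0:ℝ),
          g a * Set.indicator {p : ℝ × α | ENNReal.ofReal p.1 < W p.2}
            (fun _ => (1:ℝ≥0∞)) (t, a) ∂volume) ∂μ := by
        refine lintegral_congr fun a => ?_
        have hmt : Measurable fun t : ℝ =>
            Set.indicator {p : ℝ × α | ENNReal.ofReal p.1 < W p.2}
              (fun _ => (1:ℝ≥0∞)) (t, a) :=
          (measurable_one.indicator hbig).comp (measurable_id.prodMk measurable_const)
        rw [← lintegral_const_mul (g a) hmt]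
    _ = ∫⁻ t in Set.Ioi (0:ℝ), (∫⁻ a, g a * Set.indicator {p : ℝ × α | ENNReal.ofReal p.1 < W p.2}
            (fun _ => (1:ℝ≥0∞)) (t, a) ∂μ) ∂volume := by
        refine lintegral_lintegral_swap ?_
        exact ((hg.comp measurable_fst).mul ((measurable_one.indicator hbig).comp
          (measurable_snd.prodMk measurable_fst))).aemeasurable
    _ = _ := by
        refine setLIntegral_congr_fun_ae measurableSet_Ioi (ae_of_all _ fun t _ => ?_)
        rw [key t]

section Polar

variable {N : ℕ}

local notation "E" N => EuclideanSpace ℝ (Fin N)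

/-- Polar coordinates for lower integrals on Euclidean space. -/
lemma polar_lintegral (hN : 1 ≤ N) {h : (E N) → ℝ≥0∞} (hh : Measurable h) :
    ∫⁻ w, h w
      = ∫⁻ ω : sphere (0 : E N) 1,
          (∫⁻ s in Set.Ioi (0:ℝ),
            ENNReal.ofReal (s ^ (N-1)) * h (s • (ω : E N)) ∂volume)
          ∂((volume : Measure (E N)).toSphere) := by
  haveI : Nontrivial (E N) := by
    apply Module.nontrivial_of_finrank_pos (R := ℝ)
    rw [finrank_euclideanSpace_fin]
    omega
  have hdim : Module.finrank ℝ (E N) = N := finrank_euclideanSpace_fin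
  set F : sphere (0 : E N) 1 × Set.Ioi (0:ℝ) → ℝ≥0∞ :=
    fun p => h (p.2.1 • (p.1 : E N)) with hF
  have hFm : Measurable F := by
    apply hh.comp
    exact (continuous_subtype_val.comp continuous_snd |>.smul
      (continuous_subtype_val.comp continuous_fst)).measurable
  have step1 : ∫⁻ w, h w = ∫⁻ w : ({(0:E N)}ᶜ : Set (E N)), h w.1
      ∂((volume : Measure (E N)).comap Subtype.val) := by
    rw [lintegral_subtype_comap (measurableSet_singleton _).compl,
      MeasureTheory.restrict_compl_singleton]
  have step2 : ∫⁻ w : ({(0:E N)}ᶜ : Set (E N)), h w.1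
      ∂((volume : Measure (E N)).comap Subtype.val)
      = ∫⁻ p, F p ∂((volume : Measure (E N)).toSphere.prod
          (MeasureTheory.Measure.volumeIoiPow (Module.finrank ℝ (E N) - 1))) := by
    rw [← (Measure.measurePreserving_homeomorphUnitSphereProd
      (volume : Measure (E N))).lintegral_comp hFm]
    refine lintegral_congr fun w => ?_
    have : ((homeomorphUnitSphereProd (E N)) w).2.1 •
        (((homeomorphUnitSphereProd (E N)) w).1 : E N) = w.1 := by
      simp only [homeomorphUnitSphereProd_apply_snd_coe, homeomorphUnitSphereProd_apply_fst_coe]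
      exact smul_inv_smul₀ (norm_ne_zero_iff.2 w.2) w.1
    rw [hF]
    simp only [this]
  have step3 : ∫⁻ p, F p ∂((volume : Measure (E N)).toSphere.prod
          (MeasureTheory.Measure.volumeIoiPow (Module.finrank ℝ (E N) - 1)))
      = ∫⁻ ω : sphere (0 : E N) 1, (∫⁻ s : Set.Ioi (0:ℝ), F (ω, s)
          ∂(MeasureTheory.Measure.volumeIoiPow (Module.finrank ℝ (E N) - 1)))
          ∂((volume : Measure (E N)).toSphere) :=
    lintegral_prod F hFm.aemeasurable
  rw [step1, step2, step3]
  refine lintegral_congr fun ω => ?_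
  rw [Measure.volumeIoiPow,
    lintegral_withDensity_eq_lintegral_mul _ (by fun_prop)
      (show Measurable fun s : Set.Ioi (0:ℝ) => F (ω, s) from hFm.comp measurable_prodMk_left)]
  have : ∀ p : Set.Ioi (0:ℝ),
      ((fun r : Set.Ioi (0:ℝ) => ENNReal.ofReal (r.1 ^ (Module.finrank ℝ (E N) - 1))) *
        fun s : Set.Ioi (0:ℝ) => F (ω, s)) p
      = (fun s : ℝ => ENNReal.ofReal (s ^ (N-1)) * h (s • (ω : E N))) p.1 := by
    intro p
    simp only [Pi.mul_apply, hF, hdim]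
  rw [lintegral_congr this]
  exact lintegral_subtype_comap measurableSet_Ioi
    (fun s : ℝ => ENNReal.ofReal (s ^ (N-1)) * h (s • (ω : E N)))


/-- Maximal bound for radially decreasing kernels. -/
lemma kernel_bound (hN : 1 ≤ N) {g : (E N) → ℝ≥0∞} (hg : Measurable g) (Mx : ℝ≥0∞)
    (hball : ∀ s : ℝ, 0 < s → ∫⁻ w in ball (0 : E N) s, g w ≤ Mx * volume (ball (0 : E N) s))
    {ψ : ℝ → ℝ≥0∞} (hψm : Measurable ψ) (hψa : AntitoneOn ψ (Set.Ioi 0))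
    {r : ℝ} (hψr : ∀ u, r ≤ u → ψ u = 0) :
    ∫⁻ w, g w * ψ ‖w‖ ≤ Mx * ∫⁻ w, ψ ‖w‖ ∂(volume : Measure (E N)) := by
  haveI : Nontrivial (E N) := by
    apply Module.nontrivial_of_finrank_pos (R := ℝ)
    rw [finrank_euclideanSpace_fin]; omega
  set W : (E N) → ℝ≥0∞ := fun w => ψ ‖w‖ with hW
  have hWm : Measurable W := hψm.comp continuous_norm.measurable
  have key : ∀ t ∈ Set.Ioi (0:ℝ),
      ∫⁻ w in {w | ENNReal.ofReal t < W w}, g w ∂volume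
        ≤ Mx * volume {w | ENNReal.ofReal t < W w} := by
    intro t _
    set U : Set ℝ := {u : ℝ | 0 < u ∧ ENNReal.ofReal t < ψ u} with hU
    have hUr : ∀ u ∈ U, u < r := by
      intro u hu
      by_contra hge
      push_neg at hge
      have h2 := hu.2
      rw [hψr u hge] at h2
      exact (not_lt.2 zero_le) h2
    rcases U.eq_empty_or_nonempty with hUe | ⟨u₀, hu₀⟩
    · have hsub : {w | ENNReal.ofReal t < W w} ⊆ {(0 : E N)} := by
        intro w hw
        by_contra hw0
        have : ‖w‖ ∈ U := ⟨norm_pos_iff.2 hw0, hw⟩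
        rw [hUe] at this
        exact this
      calc ∫⁻ w in {w | ENNReal.ofReal t < W w}, g w ∂volume
          ≤ ∫⁻ w in {(0 : E N)}, g w ∂volume := lintegral_mono_set hsub
        _ = 0 := setLIntegral_measure_zero _ _ (measure_singleton 0)
        _ ≤ _ := zero_le
    · have hbdd : BddAbove U := ⟨r, fun u hu => (hUr u hu).le⟩
      set R := sSup U with hR
      have hR0 : 0 < R := lt_of_lt_of_le hu₀.1 (le_csSup hbdd hu₀)
      have hsub : {w | ENNReal.ofReal t < W w} ⊆ closedBall (0 : E N) R := by
        intro w hw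
        rcases eq_or_ne w 0 with rfl | hw0
        · exact mem_closedBall_self hR0.le
        · rw [mem_closedBall_zero_iff]
          exact le_csSup hbdd ⟨norm_pos_iff.2 hw0, hw⟩
      have hsub2 : ball (0 : E N) R \ {0} ⊆ {w | ENNReal.ofReal t < W w} := by
        intro w hw
        obtain ⟨hwb, hw0⟩ := hw
        have hwn : 0 < ‖w‖ := norm_pos_iff.2 hw0
        rw [mem_ball_zero_iff] at hwb
        obtain ⟨u, huU, hlt⟩ := exists_lt_of_lt_csSup ⟨u₀, hu₀⟩ (hR ▸ hwb)
        exact lt_of_lt_of_le huU.2 (hψa hwn huU.1 hlt.le)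
      calc ∫⁻ w in {w | ENNReal.ofReal t < W w}, g w ∂volume
          ≤ ∫⁻ w in closedBall (0 : E N) R, g w ∂volume := lintegral_mono_set hsub
        _ = ∫⁻ w in ball (0 : E N) R ∪ sphere (0 : E N) R, g w ∂volume := by
            rw [ball_union_sphere]
        _ ≤ (∫⁻ w in ball (0 : E N) R, g w ∂volume)
            + ∫⁻ w in sphere (0 : E N) R, g w ∂volume := lintegral_union_le _ _ _
        _ = ∫⁻ w in ball (0 : E N) R, g w ∂volume := by
            rw [setLIntegral_measure_zero _ _ (Measure.addHaar_sphere volume 0 R), add_zero]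
        _ ≤ Mx * volume (ball (0 : E N) R) := hball R hR0
        _ ≤ Mx * volume {w | ENNReal.ofReal t < W w} := by
            refine mul_le_mul_right ?_ Mx
            rw [← measure_diff_null (measure_singleton (0 : E N))]
            exact measure_mono hsub2
  have hanti : Antitone fun t : ℝ => volume {w | ENNReal.ofReal t < W w} := by
    intro t t' htt'
    exact measure_mono fun w hw => lt_of_le_of_lt (ENNReal.ofReal_le_ofReal htt') hw
  calc ∫⁻ w, g w * W w ∂volume
      = ∫⁻ t in Set.Ioi (0:ℝ), ∫⁻ w in {w | ENNReal.ofReal t < W w}, g w ∂volume :=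
        layercake volume hg hWm
    _ ≤ ∫⁻ t in Set.Ioi (0:ℝ), Mx * volume {w | ENNReal.ofReal t < W w} :=
        setLIntegral_mono' measurableSet_Ioi key
    _ = Mx * ∫⁻ t in Set.Ioi (0:ℝ), volume {w | ENNReal.ofReal t < W w} :=
        lintegral_const_mul Mx hanti.measurable
    _ = Mx * ∫⁻ w, W w ∂volume := by
        congr 1
        rw [show ∫⁻ w, W w ∂(volume : Measure (E N))
            = ∫⁻ w, (1 : (E N) → ℝ≥0∞) w * W w ∂volume from
          lintegral_congr fun w => (one_mul _).symm, layercake volume measurable_one hWm]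
        refine setLIntegral_congr_fun_ae measurableSet_Ioi (ae_of_all _ fun t _ => ?_)
        exact (setLIntegral_one _).symm

/-- Translation of a set lintegral over a ball. -/
lemma shift_ball {G : (E N) → ℝ≥0∞} (hG : Measurable G) (x : E N) (R : ℝ) :
    ∫⁻ y in ball x R, G y ∂volume = ∫⁻ w in ball (0 : E N) R, G (x + w) ∂volume := by
  have hmp := (measurePreserving_add_right (volume : Measure (E N)) x).map_eq
  conv_lhs => rw [← hmp]
  rw [setLIntegral_map measurableSet_ball hG (measurable_add_const x)]
  have hpre : (· + x) ⁻¹' ball x R = ball (0 : E N) R := by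
    ext w
    simp only [Set.mem_preimage, mem_ball, dist_eq_norm, add_sub_cancel_right,
      mem_ball_zero_iff, sub_zero]
  rw [hpre]
  exact lintegral_congr fun w => by rw [add_comm]

variable (N) in
/-- Elementary kernel. -/
def cker (ρ : ℝ → ℝ) (r : ℝ) : ℝ → ℝ≥0∞ := fun s =>
  ENNReal.ofReal (ρ s) * ENNReal.ofReal (s ^ (N - 1)) * (ENNReal.ofReal s)⁻¹ *
    Set.indicator (Set.Iio r) (fun _ => (1 : ℝ≥0∞)) s

variable (N) in
/-- Integrated kernel. -/
def phiker (ρ : ℝ → ℝ) (r : ℝ) : ℝ → ℝ≥0∞ := fun u =>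
  ∫⁻ s in Set.Ioi (0:ℝ) ∩ Set.Ici u, cker N ρ r s

variable (N) in
/-- Normalized integrated kernel. -/
def psiker (ρ : ℝ → ℝ) (r : ℝ) : ℝ → ℝ≥0∞ := fun u =>
  phiker N ρ r u * (ENNReal.ofReal (u ^ (N - 1)))⁻¹

lemma cker_measurable {ρ : ℝ → ℝ} (hρ : Measurable ρ) {r : ℝ} :
    Measurable (cker N ρ r) := by
  unfold cker
  exact (((hρ.ennreal_ofReal.mul (by fun_prop)).mul (by fun_prop)).mul
    (measurable_one.indicator measurableSet_Iio))

lemma phiker_antitone {ρ : ℝ → ℝ} {r : ℝ} : Antitone (phiker N ρ r) := by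
  intro u u' h
  exact lintegral_mono_set (Set.inter_subset_inter_right _ (Set.Ici_subset_Ici.2 h))

lemma phiker_measurable {ρ : ℝ → ℝ} {r : ℝ} : Measurable (phiker N ρ r) :=
  phiker_antitone.measurable

lemma psiker_measurable {ρ : ℝ → ℝ} {r : ℝ} : Measurable (psiker N ρ r) :=
  phiker_measurable.mul (by fun_prop)

lemma psiker_antitoneOn {ρ : ℝ → ℝ} {r : ℝ} : AntitoneOn (psiker N ρ r) (Set.Ioi 0) := by
  intro u hu u' hu' h
  refine mul_le_mul' (phiker_antitone h) ?_
  exact ENNReal.inv_le_inv.2 (ENNReal.ofReal_le_ofReal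
    (pow_le_pow_left₀ (le_of_lt hu) h _))

lemma psiker_eq_zero {ρ : ℝ → ℝ} {r u : ℝ} (hu : r ≤ u) : psiker N ρ r u = 0 := by
  have hz : ∀ s ∈ Set.Ioi (0:ℝ) ∩ Set.Ici u, cker N ρ r s = (fun _ => (0:ℝ≥0∞)) s := by
    intro s hs
    unfold cker
    rw [Set.indicator_of_notMem, mul_zero]
    simp only [Set.mem_Iio, not_lt]
    exact le_trans hu hs.2
  have : phiker N ρ r u = 0 := by
    unfold phiker
    rw [setLIntegral_congr_fun_ae (measurableSet_Ioi.inter measurableSet_Ici)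
      (ae_of_all _ hz), lintegral_zero]
  unfold psiker
  rw [this, zero_mul]

lemma main_eq (hN : 1 ≤ N) {g : (E N) → ℝ≥0∞} (hg : Measurable g) {ρ : ℝ → ℝ}
    (hρ : Measurable ρ) {r : ℝ} (hr : 0 < r) (x : E N) :
    (∫⁻ w in ball (0 : E N) r, ∫⁻ t in Set.Ioc (0:ℝ) 1,
        g (x + t • w) * ENNReal.ofReal (ρ ‖w‖) ∂volume ∂volume)
      = ∫⁻ w, g (x + w) * psiker N ρ r ‖w‖ ∂volume := by
  set H : (E N) → ℝ≥0∞ := fun w => g (x + w) * psiker N ρ r ‖w‖ with hH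
  have hHm : Measurable H :=
    (hg.comp (measurable_const.add measurable_id)).mul
      (psiker_measurable.comp continuous_norm.measurable)
  set h : (E N) → ℝ≥0∞ := fun w => (∫⁻ t in Set.Ioc (0:ℝ) 1, g (x + t • w) ∂volume) *
      (ENNReal.ofReal (ρ ‖w‖) * Set.indicator (Set.Iio r) (fun _ => (1:ℝ≥0∞)) ‖w‖) with hh
  have hsm : Measurable fun (p : (E N) × ℝ) => g (x + p.2 • p.1) :=
    hg.comp (continuous_const.add (continuous_snd.smul continuous_fst)).measurable
  have hinner : Measurable fun w : E N => ∫⁻ t in Set.Ioc (0:ℝ) 1, g (x + t • w) ∂volume :=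
    Measurable.lintegral_prod_right (f := fun w t => g (x + t • w)) hsm
  have hhm : Measurable h :=
    hinner.mul ((hρ.ennreal_ofReal.comp continuous_norm.measurable).mul
      ((measurable_one.indicator measurableSet_Iio).comp continuous_norm.measurable))
  have stepA : (∫⁻ w in ball (0 : E N) r, ∫⁻ t in Set.Ioc (0:ℝ) 1,
        g (x + t • w) * ENNReal.ofReal (ρ ‖w‖) ∂volume ∂volume) = ∫⁻ w, h w ∂volume := by
    rw [← lintegral_indicator measurableSet_ball]
    refine lintegral_congr fun w => ?_
    by_cases hw : w ∈ ball (0 : E N) r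
    · rw [Set.indicator_of_mem hw]
      show _ = (∫⁻ t in Set.Ioc (0:ℝ) 1, g (x + t • w) ∂volume) *
        (ENNReal.ofReal (ρ ‖w‖) * Set.indicator (Set.Iio r) (fun _ => (1:ℝ≥0∞)) ‖w‖)
      have h1 : ‖w‖ ∈ Set.Iio r := mem_ball_zero_iff.mp hw
      rw [Set.indicator_of_mem h1, mul_one,
        lintegral_mul_const _ (show Measurable fun t : ℝ => g (x + t • w) from
          hg.comp (measurable_const.add (measurable_id.smul_const w)))]
    · rw [Set.indicator_of_notMem hw]
      show (0:ℝ≥0∞) = (∫⁻ t in Set.Ioc (0:ℝ) 1, g (x + t • w) ∂volume) *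
        (ENNReal.ofReal (ρ ‖w‖) * Set.indicator (Set.Iio r) (fun _ => (1:ℝ≥0∞)) ‖w‖)
      have h1 : ‖w‖ ∉ Set.Iio r := fun hc => hw (mem_ball_zero_iff.mpr hc)
      rw [Set.indicator_of_notMem h1, mul_zero, mul_zero]
  rw [stepA, polar_lintegral hN hhm, polar_lintegral hN hHm]
  refine lintegral_congr fun ω => ?_
  set q : ℝ → ℝ≥0∞ := fun u => g (x + u • (ω : E N)) with hq
  have hqm : Measurable q := hg.comp (measurable_const.add (measurable_id.smul_const _))
  have hωn : ‖(ω : E N)‖ = 1 := mem_sphere_zero_iff_norm.mp ω.2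
  have hnorm : ∀ s : ℝ, 0 < s → ‖s • (ω : E N)‖ = s := by
    intro s hs
    rw [norm_smul, hωn, mul_one, Real.norm_eq_abs, abs_of_pos hs]
  set ind2 : ℝ × ℝ → ℝ≥0∞ := Set.indicator {p : ℝ × ℝ | p.2 ≤ p.1} (fun _ => 1) with hind2
  have hind2m : Measurable ind2 :=
    measurable_one.indicator (measurableSet_le measurable_snd measurable_fst)
  have hind2eq : ∀ s u : ℝ, ind2 (s, u) = Set.indicator (Set.Ici u) (fun _ => (1:ℝ≥0∞)) s := by
    intro s u
    by_cases hc : u ≤ s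
    · simp [hind2, Set.indicator_apply, Set.mem_setOf_eq, Set.mem_Ici, hc]
    · simp [hind2, Set.indicator_apply, Set.mem_setOf_eq, Set.mem_Ici, hc]
  have hQ : ∀ s : ℝ, ∫⁻ u in Set.Ioc (0:ℝ) s, q u ∂volume
      = ∫⁻ u in Set.Ioi (0:ℝ), q u * ind2 (s, u) ∂volume := by
    intro s
    have : ∀ u : ℝ, q u * ind2 (s, u) = Set.indicator (Set.Iic s) q u := by
      intro u
      rw [hind2eq]
      by_cases hc : u ≤ s
      · simp [Set.indicator_apply, Set.mem_Ici, Set.mem_Iic, hc]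
      · simp [Set.indicator_apply, Set.mem_Ici, Set.mem_Iic, hc]
    rw [lintegral_congr this, lintegral_indicator measurableSet_Iic,
      Measure.restrict_restrict measurableSet_Iic, Set.Iic_inter_Ioi]
  have stepC1 : ∀ s ∈ Set.Ioi (0:ℝ),
      ENNReal.ofReal (s ^ (N-1)) * h (s • (ω : E N))
        = cker N ρ r s * ∫⁻ u in Set.Ioc (0:ℝ) s, q u ∂volume := by
    intro s hs
    have hs0 : (0:ℝ) < s := hs
    have htmul : ∀ t : ℝ, g (x + t • (s • (ω : E N))) = q (s * t) := by
      intro t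
      rw [hq, smul_smul, mul_comm]
    simp only [hh, hnorm s hs0]
    rw [show (∫⁻ t in Set.Ioc (0:ℝ) 1, g (x + t • (s • (ω : E N))) ∂volume)
        = ∫⁻ t in Set.Ioc (0:ℝ) 1, q (s * t) ∂volume from lintegral_congr fun t => by
          rw [htmul]]
    rw [scale1d hs0 hqm]
    unfold cker
    ring
  rw [setLIntegral_congr_fun_ae measurableSet_Ioi (ae_of_all _ stepC1)]
  have stepC2 : ∫⁻ s in Set.Ioi (0:ℝ), cker N ρ r s * ∫⁻ u in Set.Ioc (0:ℝ) s, q u ∂volume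
      = ∫⁻ u in Set.Ioi (0:ℝ), q u * phiker N ρ r u ∂volume := by
    calc ∫⁻ s in Set.Ioi (0:ℝ), cker N ρ r s * ∫⁻ u in Set.Ioc (0:ℝ) s, q u ∂volume
        = ∫⁻ s in Set.Ioi (0:ℝ), ∫⁻ u in Set.Ioi (0:ℝ),
            cker N ρ r s * (q u * ind2 (s, u)) ∂volume ∂volume := by
          refine setLIntegral_congr_fun_ae measurableSet_Ioi (ae_of_all _ fun s _ => ?_)
          rw [hQ s, ← lintegral_const_mul _
            (show Measurable fun u : ℝ => q u * ind2 (s, u) from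
              hqm.mul (hind2m.comp measurable_prodMk_left))]
      _ = ∫⁻ u in Set.Ioi (0:ℝ), ∫⁻ s in Set.Ioi (0:ℝ),
            cker N ρ r s * (q u * ind2 (s, u)) ∂volume ∂volume := by
          refine lintegral_lintegral_swap ?_
          exact (((cker_measurable hρ).comp measurable_fst).mul
            ((hqm.comp measurable_snd).mul hind2m)).aemeasurable
      _ = ∫⁻ u in Set.Ioi (0:ℝ), q u * phiker N ρ r u ∂volume := by
          refine setLIntegral_congr_fun_ae measurableSet_Ioi (ae_of_all _ fun u _ => ?_)
          have h1 : ∀ s : ℝ, cker N ρ r s * (q u * ind2 (s, u))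
              = q u * Set.indicator (Set.Ici u) (cker N ρ r) s := by
            intro s
            rw [hind2eq]
            by_cases hc : s ∈ Set.Ici u
            · rw [Set.indicator_of_mem hc, Set.indicator_of_mem hc, mul_one]
              ring
            · rw [Set.indicator_of_notMem hc, Set.indicator_of_notMem hc]
              simp
          rw [lintegral_congr h1,
            lintegral_const_mul _ ((cker_measurable hρ).indicator measurableSet_Ici),
            lintegral_indicator measurableSet_Ici, Measure.restrict_restrict measurableSet_Ici]
          unfold phiker
          rw [Set.inter_comm]
  rw [stepC2]
  refine setLIntegral_congr_fun_ae measurableSet_Ioi (ae_of_all _ fun u hu => ?_)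
  have hu0 : (0:ℝ) < u := hu
  have hpow0 : ENNReal.ofReal (u ^ (N-1)) ≠ 0 := by
    simp only [ne_eq, ENNReal.ofReal_eq_zero, not_le]
    positivity
  simp only [hH, hnorm u hu0]
  unfold psiker
  rw [show ENNReal.ofReal (u ^ (N-1)) * (g (x + u • (ω : E N)) *
      (phiker N ρ r u * (ENNReal.ofReal (u ^ (N-1)))⁻¹))
      = g (x + u • (ω : E N)) * phiker N ρ r u *
        (ENNReal.ofReal (u ^ (N-1)) * (ENNReal.ofReal (u ^ (N-1)))⁻¹) from by ring,
    ENNReal.mul_inv_cancel hpow0 ENNReal.ofReal_ne_top, mul_one, hq]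

lemma psiker_int (hN : 1 ≤ N) {ρ : ℝ → ℝ} (hρ : Measurable ρ)
    (hρ0 : ∀ s ∈ Set.Ioi (0:ℝ), 0 ≤ ρ s) {r : ℝ}
    (hI : (∫⁻ s in Set.Ioi (0:ℝ), ENNReal.ofReal (ρ s * s ^ (N-1)) ∂volume) = 1) :
    (∫⁻ w, psiker N ρ r ‖w‖ ∂(volume : Measure (E N)))
      ≤ (N : ℝ≥0∞) * volume (ball (0 : E N) 1) := by
  haveI : Nontrivial (E N) := by
    apply Module.nontrivial_of_finrank_pos (R := ℝ)
    rw [finrank_euclideanSpace_fin]; omega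
  have hdim : Module.finrank ℝ (E N) = N := finrank_euclideanSpace_fin
  have hpsim : Measurable fun w : E N => psiker N ρ r ‖w‖ :=
    psiker_measurable.comp continuous_norm.measurable
  rw [polar_lintegral hN hpsim]
  set ind2 : ℝ × ℝ → ℝ≥0∞ := Set.indicator {p : ℝ × ℝ | p.1 ≤ p.2} (fun _ => 1) with hind2
  have hind2m : Measurable ind2 :=
    measurable_one.indicator (measurableSet_le measurable_fst measurable_snd)
  have hJ : ∀ ω : sphere (0 : E N) 1,
      (∫⁻ s in Set.Ioi (0:ℝ), ENNReal.ofReal (s ^ (N-1)) * psiker N ρ r ‖s • (ω : E N)‖ ∂volume)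
        = ∫⁻ u in Set.Ioi (0:ℝ), phiker N ρ r u ∂volume := by
    intro ω
    have hωn : ‖(ω : E N)‖ = 1 := mem_sphere_zero_iff_norm.mp ω.2
    refine setLIntegral_congr_fun_ae measurableSet_Ioi (ae_of_all _ fun u hu => ?_)
    have hu0 : (0:ℝ) < u := hu
    have hn : ‖u • (ω : E N)‖ = u := by
      rw [norm_smul, hωn, mul_one, Real.norm_eq_abs, abs_of_pos hu0]
    have hpow0 : ENNReal.ofReal (u ^ (N-1)) ≠ 0 := by
      simp only [ne_eq, ENNReal.ofReal_eq_zero, not_le]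
      positivity
    rw [hn]
    unfold psiker
    rw [show ENNReal.ofReal (u ^ (N-1)) * (phiker N ρ r u * (ENNReal.ofReal (u ^ (N-1)))⁻¹)
        = phiker N ρ r u * (ENNReal.ofReal (u ^ (N-1)) * (ENNReal.ofReal (u ^ (N-1)))⁻¹) from
        by ring,
      ENNReal.mul_inv_cancel hpow0 ENNReal.ofReal_ne_top, mul_one]
  calc (∫⁻ ω : sphere (0 : E N) 1, (∫⁻ s in Set.Ioi (0:ℝ),
        ENNReal.ofReal (s ^ (N-1)) * psiker N ρ r ‖s • (ω : E N)‖ ∂volume)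
        ∂((volume : Measure (E N)).toSphere))
      = ∫⁻ _ : sphere (0 : E N) 1, (∫⁻ u in Set.Ioi (0:ℝ), phiker N ρ r u ∂volume)
          ∂((volume : Measure (E N)).toSphere) := lintegral_congr hJ
    _ = (∫⁻ u in Set.Ioi (0:ℝ), phiker N ρ r u ∂volume)
          * (volume : Measure (E N)).toSphere Set.univ := lintegral_const _
    _ ≤ 1 * (volume : Measure (E N)).toSphere Set.univ := by
        refine mul_le_mul_left ?_ _
        have swap1 : (∫⁻ u in Set.Ioi (0:ℝ), phiker N ρ r u ∂volume)
            = ∫⁻ s in Set.Ioi (0:ℝ), (∫⁻ u in Set.Ioi (0:ℝ),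
                cker N ρ r s * ind2 (u, s) ∂volume) ∂volume := by
          rw [← lintegral_lintegral_swap]
          · refine setLIntegral_congr_fun_ae measurableSet_Ioi (ae_of_all _ fun u _ => ?_)
            have h1 : ∀ s : ℝ, cker N ρ r s * ind2 (u, s)
                = Set.indicator (Set.Ici u) (cker N ρ r) s := by
              intro s
              by_cases hc : u ≤ s
              · have hm1 : (u, s) ∈ {p : ℝ × ℝ | p.1 ≤ p.2} := hc
                have hm2 : s ∈ Set.Ici u := hc
                rw [hind2, Set.indicator_of_mem hm1, Set.indicator_of_mem hm2, mul_one]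
              · have hm1 : (u, s) ∉ {p : ℝ × ℝ | p.1 ≤ p.2} := hc
                have hm2 : s ∉ Set.Ici u := hc
                rw [hind2, Set.indicator_of_notMem hm1, Set.indicator_of_notMem hm2, mul_zero]
            rw [lintegral_congr h1, lintegral_indicator measurableSet_Ici,
              Measure.restrict_restrict measurableSet_Ici]
            unfold phiker
            rw [Set.inter_comm]
          · exact (((cker_measurable hρ).comp measurable_snd).mul
              (hind2m.comp (measurable_fst.prodMk measurable_snd))).aemeasurable
        rw [swap1, ← hI]
        refine setLIntegral_mono' measurableSet_Ioi fun s hs => ?_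
        have hs0 : (0:ℝ) < s := hs
        have hin : (∫⁻ u in Set.Ioi (0:ℝ), cker N ρ r s * ind2 (u, s) ∂volume)
            = cker N ρ r s * ENNReal.ofReal s := by
          have h1 : ∀ u : ℝ, cker N ρ r s * ind2 (u, s)
              = Set.indicator (Set.Iic s) (fun _ => cker N ρ r s) u := by
            intro u
            by_cases hc : u ≤ s
            · have hm1 : (u, s) ∈ {p : ℝ × ℝ | p.1 ≤ p.2} := hc
              have hm2 : u ∈ Set.Iic s := hc
              rw [hind2, Set.indicator_of_mem hm1, Set.indicator_of_mem hm2, mul_one]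
            · have hm1 : (u, s) ∉ {p : ℝ × ℝ | p.1 ≤ p.2} := hc
              have hm2 : u ∉ Set.Iic s := hc
              rw [hind2, Set.indicator_of_notMem hm1, Set.indicator_of_notMem hm2, mul_zero]
          rw [lintegral_congr h1, lintegral_indicator measurableSet_Iic,
            Measure.restrict_restrict measurableSet_Iic, Set.Iic_inter_Ioi,
            setLIntegral_const, Real.volume_Ioc, sub_zero]
        rw [hin]
        unfold cker
        have hs' : ENNReal.ofReal s ≠ 0 := by
          simp only [ne_eq, ENNReal.ofReal_eq_zero, not_le]; exact hs0
        calc ENNReal.ofReal (ρ s) * ENNReal.ofReal (s ^ (N-1)) * (ENNReal.ofReal s)⁻¹ *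
              Set.indicator (Set.Iio r) (fun _ => (1:ℝ≥0∞)) s * ENNReal.ofReal s
            ≤ ENNReal.ofReal (ρ s) * ENNReal.ofReal (s ^ (N-1)) * (ENNReal.ofReal s)⁻¹ *
              1 * ENNReal.ofReal s := by
              gcongr
              by_cases hc : s ∈ Set.Iio r
              · simp [Set.indicator_of_mem hc]
              · simp [Set.indicator_of_notMem hc]
          _ = ENNReal.ofReal (ρ s) * ENNReal.ofReal (s ^ (N-1)) *
              ((ENNReal.ofReal s)⁻¹ * ENNReal.ofReal s) := by ring
          _ = ENNReal.ofReal (ρ s) * ENNReal.ofReal (s ^ (N-1)) := by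
              rw [ENNReal.inv_mul_cancel hs' ENNReal.ofReal_ne_top, mul_one]
          _ = ENNReal.ofReal (ρ s * s ^ (N-1)) := (ENNReal.ofReal_mul (hρ0 s hs)).symm
    _ = (N : ℝ≥0∞) * volume (ball (0 : E N) 1) := by
        rw [one_mul, Measure.toSphere_apply_univ, hdim]

lemma inner_congr (hN : 1 ≤ N) {f f' : (E N) → ℂ} (hff' : f =ᵐ[volume] f') (x : E N)
    (r : ℝ) (ρ : ℝ → ℝ) :
    (∫⁻ y in ball x r, ∫⁻ t in Set.Ioc (0:ℝ) 1,
        (‖f (x + t • (y - x))‖₊ : ℝ≥0∞) * ENNReal.ofReal (ρ ‖y - x‖) ∂volume ∂volume)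
      = ∫⁻ y in ball x r, ∫⁻ t in Set.Ioc (0:ℝ) 1,
        (‖f' (x + t • (y - x))‖₊ : ℝ≥0∞) * ENNReal.ofReal (ρ ‖y - x‖) ∂volume ∂volume := by
  have hnull : volume {z : E N | ¬ f z = f' z} = 0 := ae_iff.mp hff'
  obtain ⟨D, hDsub, hDm, hD0⟩ := exists_measurable_superset_of_null hnull
  -- the affine map `y ↦ x + t • (y - x)` is quasi measure preserving for t ≠ 0
  have hqmp : ∀ t : ℝ, t ≠ 0 → Measure.QuasiMeasurePreserving
      (fun y : E N => x + t • (y - x)) volume volume := by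
    intro t ht
    have : (fun y : E N => x + t • (y - x))
        = ((fun z : E N => x + z) ∘ ((fun z : E N => t • z) ∘ (fun y : E N => y + (-x)))) := by
      funext y
      simp [sub_eq_add_neg]
    rw [this]
    exact ((measurePreserving_add_left volume x).quasiMeasurePreserving.comp
      ((Measure.quasiMeasurePreserving_smul volume ht).comp
        (measurePreserving_add_right volume (-x)).quasiMeasurePreserving))
  have hkeym : Measurable fun y : E N =>
      ∫⁻ t in Set.Ioc (0:ℝ) 1, D.indicator (fun _ => (1:ℝ≥0∞)) (x + t • (y - x)) ∂volume := by
    refine Measurable.lintegral_prod_right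
      (f := fun y t => D.indicator (fun _ => (1:ℝ≥0∞)) (x + t • (y - x))) ?_
    exact (measurable_one.indicator hDm).comp
      (continuous_const.add (continuous_snd.smul (continuous_fst.sub continuous_const))).measurable
  have key : (∫⁻ y, ∫⁻ t in Set.Ioc (0:ℝ) 1,
      D.indicator (fun _ => (1:ℝ≥0∞)) (x + t • (y - x)) ∂volume ∂volume) = 0 := by
    rw [lintegral_lintegral_swap (show AEMeasurable (Function.uncurry fun (y : E N) (t : ℝ) =>
        D.indicator (fun _ => (1:ℝ≥0∞)) (x + t • (y - x))) (volume.prod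
          (volume.restrict (Set.Ioc (0:ℝ) 1))) from
      ((measurable_one.indicator hDm).comp (continuous_const.add
        (continuous_snd.smul (continuous_fst.sub continuous_const))).measurable).aemeasurable)]
    rw [setLIntegral_congr_fun_ae measurableSet_Ioc (ae_of_all _ fun t ht => ?_), lintegral_zero]
    have ht0 : t ≠ 0 := ne_of_gt ht.1
    have hind : ∀ y : E N, D.indicator (fun _ => (1:ℝ≥0∞)) (x + t • (y - x))
        = Set.indicator ((fun y : E N => x + t • (y - x)) ⁻¹' D) (1 : (E N) → ℝ≥0∞) y := by
      intro y
      by_cases hc : x + t • (y - x) ∈ D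
      · simp [Set.indicator_apply, hc, Set.mem_preimage]
      · simp [Set.indicator_apply, hc, Set.mem_preimage]
    rw [lintegral_congr hind, lintegral_indicator_one
      (((hqmp t ht0).measurable) hDm)]
    exact (hqmp t ht0).preimage_null hD0
  have hae : ∀ᵐ y : E N ∂volume, (∫⁻ t in Set.Ioc (0:ℝ) 1,
      D.indicator (fun _ => (1:ℝ≥0∞)) (x + t • (y - x)) ∂volume) = 0 := by
    have := (lintegral_eq_zero_iff hkeym).mp key
    filter_upwards [this] with y hy using hy
  refine lintegral_congr_ae (ae_restrict_of_ae ?_)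
  filter_upwards [hae] with y hy
  refine lintegral_congr_ae ?_
  have hsub2 : {t : ℝ | ¬ ((‖f (x + t • (y - x))‖₊ : ℝ≥0∞) * ENNReal.ofReal (ρ ‖y - x‖)
      = (‖f' (x + t • (y - x))‖₊ : ℝ≥0∞) * ENNReal.ofReal (ρ ‖y - x‖))}
      ⊆ (fun t : ℝ => x + t • (y - x)) ⁻¹' D := by
    intro t ht
    by_contra hc
    have : f (x + t • (y - x)) = f' (x + t • (y - x)) := by
      by_contra hne
      exact hc (hDsub hne)
    exact ht (by rw [this])
  have hz : (volume.restrict (Set.Ioc (0:ℝ) 1)) ((fun t : ℝ => x + t • (y - x)) ⁻¹' D) = 0 := by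
    rw [Measure.restrict_apply']
    swap
    · exact measurableSet_Ioc
    have hind : ∀ t : ℝ, D.indicator (fun _ => (1:ℝ≥0∞)) (x + t • (y - x))
        = Set.indicator ((fun t : ℝ => x + t • (y - x)) ⁻¹' D) (1 : ℝ → ℝ≥0∞) t := by
      intro t
      by_cases hc : x + t • (y - x) ∈ D
      · simp [Set.indicator_apply, hc, Set.mem_preimage]
      · simp [Set.indicator_apply, hc, Set.mem_preimage]
    have hpm : MeasurableSet ((fun t : ℝ => x + t • (y - x)) ⁻¹' D) := by
      exact hDm.preimage (measurable_const.add ((measurable_id.smul_const (y - x))))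
    rw [lintegral_congr hind, lintegral_indicator_one hpm,
      Measure.restrict_apply' measurableSet_Ioc] at hy
    exact hy
  rw [Filter.eventuallyEq_iff_exists_mem]
  refine ⟨_, ?_, fun t ht => not_not.mp ht⟩
  refine mem_ae_iff.mpr ?_
  exact measure_mono_null (fun t ht => hsub2 (fun h => ht (fun hn => hn h))) hz

/-- The Hardy–Littlewood maximal function `M(f)(x) = sup_{s>0} (1/|B_x(s)|) ∫_{B_x(s)} |f|`. -/
def maxFn {N : ℕ} (f : EuclideanSpace ℝ (Fin N) → ℂ) (x : EuclideanSpace ℝ (Fin N)) : ℝ≥0∞ :=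
  ⨆ (s : ℝ) (_ : 0 < s),
    (volume (ball x s))⁻¹ * ∫⁻ y in ball x s, (‖f y‖₊ : ℝ≥0∞)

/-- maximal function bound for averaged radial integrals. -/
theorem maximal_bound (N : ℕ) (hN : 1 ≤ N) :
    ∃ C : ℝ, 0 < C ∧
      ∀ f : EuclideanSpace ℝ (Fin N) → ℂ,
        LocallyIntegrable f (volume : Measure (EuclideanSpace ℝ (Fin N))) →
        ∀ r : ℝ, 0 < r →
        ∀ ρ : ℝ → ℝ, Measurable ρ → (∀ s ∈ Set.Ioi (0:ℝ), 0 ≤ ρ s) →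
          (∫ s in Set.Ioi (0:ℝ), ρ s * s ^ (N - 1)) = 1 →
          ∀ᵐ x : EuclideanSpace ℝ (Fin N),
            (∫⁻ y in ball x r,
                ∫⁻ t in Set.Ioc (0:ℝ) 1,
                  (‖f (x + t • (y - x))‖₊ : ℝ≥0∞) * ENNReal.ofReal (ρ ‖y - x‖))
              ≤ ENNReal.ofReal C * maxFn f x := by
  have hvpos : 0 < volume (ball (0 : E N) 1) := measure_ball_pos volume _ one_pos
  have hvlt : volume (ball (0 : E N) 1) < ⊤ := measure_ball_lt_top
  refine ⟨N * (volume (ball (0 : E N) 1)).toReal, ?_, ?_⟩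
  · apply mul_pos
    · exact_mod_cast Nat.pos_of_ne_zero (by omega)
    · exact ENNReal.toReal_pos hvpos.ne' hvlt.ne
  intro f hf r hr ρ hρm hρ0 hρI
  have hCeq : ENNReal.ofReal ((N : ℝ) * (volume (ball (0 : E N) 1)).toReal)
      = (N : ℝ≥0∞) * volume (ball (0 : E N) 1) := by
    rw [ENNReal.ofReal_mul (by positivity), ENNReal.ofReal_natCast,
      ENNReal.ofReal_toReal hvlt.ne]
  -- measurable representative
  have hfm : AEStronglyMeasurable f volume := hf.aestronglyMeasurable
  set f' : (E N) → ℂ := hfm.mk f with hf'def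
  have hff' : f =ᵐ[volume] f' := hfm.ae_eq_mk
  set g : (E N) → ℝ≥0∞ := fun z => (‖f' z‖₊ : ℝ≥0∞) with hgdef
  have hg : Measurable g := hfm.measurable_mk.nnnorm.coe_nnreal_ennreal
  -- the lintegral hypothesis
  have hI : (∫⁻ s in Set.Ioi (0:ℝ), ENNReal.ofReal (ρ s * s ^ (N-1)) ∂volume) = 1 := by
    have hint : Integrable (fun s => ρ s * s ^ (N-1)) (volume.restrict (Set.Ioi 0)) := by
      by_contra hc
      rw [integral_undef hc] at hρI
      exact one_ne_zero hρI.symm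
    rw [← ofReal_integral_eq_lintegral_ofReal hint
      (((ae_restrict_mem measurableSet_Ioi).mono fun s hs =>
        mul_nonneg (hρ0 s hs) (pow_nonneg (le_of_lt hs) _))), hρI, ENNReal.ofReal_one]
  refine ae_of_all _ fun x => ?_
  -- ball lintegral bound from the maximal function
  have hball : ∀ s : ℝ, 0 < s →
      (∫⁻ w in ball (0 : E N) s, g (x + w) ∂volume)
        ≤ maxFn f x * volume (ball (0 : E N) s) := by
    intro s hs
    have h1 : (∫⁻ w in ball (0 : E N) s, g (x + w) ∂volume)
        = ∫⁻ z in ball x s, (‖f z‖₊ : ℝ≥0∞) ∂volume := by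
      rw [← shift_ball hg x s]
      refine lintegral_congr_ae (ae_restrict_of_ae ?_)
      filter_upwards [hff'] with z hz
      rw [hgdef]
      simp only [hz]
    have h2 : (volume (ball x s))⁻¹ * ∫⁻ z in ball x s, (‖f z‖₊ : ℝ≥0∞) ∂volume
        ≤ maxFn f x := by
      unfold maxFn
      exact le_iSup₂ (f := fun (s : ℝ) (_ : 0 < s) =>
        (volume (ball x s))⁻¹ * ∫⁻ y in ball x s, (‖f y‖₊ : ℝ≥0∞)) s hs
    have hv0 : volume (ball x s) ≠ 0 := (measure_ball_pos volume x hs).ne'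
    have hvt : volume (ball x s) ≠ ⊤ := measure_ball_lt_top.ne
    calc (∫⁻ w in ball (0 : E N) s, g (x + w) ∂volume)
        = volume (ball x s) * ((volume (ball x s))⁻¹
            * ∫⁻ z in ball x s, (‖f z‖₊ : ℝ≥0∞) ∂volume) := by
          rw [← mul_assoc, ENNReal.mul_inv_cancel hv0 hvt, one_mul, h1]
      _ ≤ volume (ball x s) * maxFn f x := mul_le_mul_right h2 _
      _ = maxFn f x * volume (ball (0 : E N) s) := by
          rw [mul_comm, Measure.addHaar_ball_center]
  -- main chain
  calc (∫⁻ y in ball x r, ∫⁻ t in Set.Ioc (0:ℝ) 1,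
        (‖f (x + t • (y - x))‖₊ : ℝ≥0∞) * ENNReal.ofReal (ρ ‖y - x‖))
      = ∫⁻ y in ball x r, ∫⁻ t in Set.Ioc (0:ℝ) 1,
          g (x + t • (y - x)) * ENNReal.ofReal (ρ ‖y - x‖) :=
        inner_congr hN hff' x r ρ
    _ = ∫⁻ w in ball (0 : E N) r, ∫⁻ t in Set.Ioc (0:ℝ) 1,
          g (x + t • w) * ENNReal.ofReal (ρ ‖w‖) := by
        have hGm : Measurable fun y : E N => ∫⁻ t in Set.Ioc (0:ℝ) 1,
            g (x + t • (y - x)) * ENNReal.ofReal (ρ ‖y - x‖) ∂volume := by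
          refine Measurable.lintegral_prod_right
            (f := fun y t => g (x + t • (y - x)) * ENNReal.ofReal (ρ ‖y - x‖)) ?_
          exact ((hg.comp (continuous_const.add (continuous_snd.smul
            (continuous_fst.sub continuous_const))).measurable).mul
            ((hρm.ennreal_ofReal.comp continuous_norm.measurable).comp
              (continuous_fst.sub continuous_const).measurable))
        rw [shift_ball hGm x r]
        refine setLIntegral_congr_fun_ae measurableSet_ball (ae_of_all _ fun w _ => ?_)
        simp only [add_sub_cancel_left]
    _ = ∫⁻ w, g (x + w) * psiker N ρ r ‖w‖ ∂volume := main_eq hN hg hρm hr x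
    _ ≤ maxFn f x * ∫⁻ w, psiker N ρ r ‖w‖ ∂volume := by
        refine kernel_bound hN (hg.comp (measurable_const.add measurable_id)) (maxFn f x)
          hball psiker_measurable psiker_antitoneOn (fun u hu => psiker_eq_zero hu)
    _ ≤ maxFn f x * ((N : ℝ≥0∞) * volume (ball (0 : E N) 1)) :=
        mul_le_mul_right (psiker_int hN hρm hρ0 hI) _
    _ = ENNReal.ofReal ((N : ℝ) * (volume (ball (0 : E N) 1)).toReal) * maxFn f x := by
        rw [hCeq, mul_comm]
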